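/- Let k ≥ 3. In the antiregular k-hypergraph with binary building string 0[k-1]1010... on n ≥ k vertices, the vertex-degrees satisfy: d(1) = d(2) = ... = d(k), d(k) > d(i_1) > d(i_2) for any isolated vertices k < i_1 < i_2, and d(j_1) < d(j_2) for any dominating vertices j_1 < j_2. In particular, exactly k vertices share a common vertex-degree and all other vertex-degrees are distinct. -/

import Mathlib

/-- In the antiregular `k`-hypergraph with building string `0[k-1]1010...`,
vertex `i` (1-indexed) is a dominating vertex iff `k ≤ i` and `i - k` is even. -/
def isDominating (k i : ℕ) : Prop := k ≤ i ∧ (i - k) % 2 = 0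

instance (k i : ℕ) : Decidable (isDominating k i) := by unfold isDominating; infer_instance

/-- A `k`-set `e` of vertices is a hyperedge iff its last-added (i.e. largest) vertex
is dominating. -/
def isHyperedge (k : ℕ) (e : Finset ℕ) : Prop :=
  e.card = k ∧ ∃ M ∈ e, (∀ x ∈ e, x ≤ M) ∧ isDominating k M

instance (k : ℕ) (e : Finset ℕ) : Decidable (isHyperedge k e) := by
  unfold isHyperedge; infer_instance

/-- The vertex-degree of vertex `v` in the antiregular `k`-hypergraph on
vertices `{1, …, n}`: the number of hyperedges containing `v`. -/
def antiregDegree (k n v : ℕ) : ℕ :=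
  ((Finset.Icc 1 n).powerset.filter (fun e => isHyperedge k e ∧ v ∈ e)).card

def domS (k n v : ℕ) : ℕ :=
  ∑ M ∈ Finset.Ioc v n, if isDominating k M then (M-2).choose (k-2) else 0

lemma count_superset (s t : Finset ℕ) (h : t ⊆ s) (k : ℕ) (hk : t.card ≤ k) :
    (s.powerset.filter (fun e => e.card = k ∧ t ⊆ e)).card
      = (s.card - t.card).choose (k - t.card) := by
  rw [← Finset.card_sdiff_of_subset h, ← Finset.card_powersetCard]
  apply Finset.card_bij (fun e _ => e \ t)
  · intro e he
    simp only [Finset.mem_filter, Finset.mem_powerset] at he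
    obtain ⟨hes, hek, hte⟩ := he
    rw [Finset.mem_powersetCard]
    constructor
    · exact Finset.sdiff_subset_sdiff hes (le_refl t)
    · rw [Finset.card_sdiff_of_subset hte, hek]
  · intro e₁ h₁ e₂ h₂ heq
    simp only [Finset.mem_filter, Finset.mem_powerset] at h₁ h₂
    rw [← Finset.sdiff_union_of_subset h₁.2.2, ← Finset.sdiff_union_of_subset h₂.2.2, heq]
  · intro f hf
    rw [Finset.mem_powersetCard] at hf
    obtain ⟨hfs, hfc⟩ := hf
    have hdisj : Disjoint f t := Finset.disjoint_of_subset_left hfs Finset.sdiff_disjoint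
    refine ⟨f ∪ t, ?_, ?_⟩
    · simp only [Finset.mem_filter, Finset.mem_powerset]
      refine ⟨Finset.union_subset (hfs.trans Finset.sdiff_subset) h, ?_, Finset.subset_union_right⟩
      rw [Finset.card_union_of_disjoint hdisj, hfc]
      omega
    · rw [Finset.union_sdiff_distrib, Finset.sdiff_self, Finset.union_empty,
        Finset.sdiff_eq_self_of_disjoint hdisj]

lemma fiber_card (k n v M : ℕ) (hk : 3 ≤ k) (hv : 1 ≤ v) (hM : M ∈ Finset.Icc 1 n) :
    (((Finset.Icc 1 n).powerset.filter (fun e => isHyperedge k e ∧ v ∈ e)).filter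
        (fun e => WithBot.unbotD 0 e.max = M)).card
      = if isDominating k M ∧ v ≤ M then
          (if v = M then (M-1).choose (k-1) else (M-2).choose (k-2)) else 0 := by
  rw [Finset.mem_Icc] at hM
  by_cases hcond : isDominating k M ∧ v ≤ M
  · rw [if_pos hcond]
    have key : ((Finset.Icc 1 n).powerset.filter (fun e => isHyperedge k e ∧ v ∈ e)).filter
        (fun e => WithBot.unbotD 0 e.max = M)
        = (Finset.Icc 1 M).powerset.filter (fun e => e.card = k ∧ ({v, M} : Finset ℕ) ⊆ e) := by
      ext e
      simp only [Finset.mem_filter, Finset.mem_powerset]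
      constructor
      · rintro ⟨⟨hsub, ⟨hcard, M', hM'e, hub, hdom⟩, hve⟩, hmax⟩
        have hne : e.Nonempty := Finset.card_pos.mp (by omega)
        have hmax' : e.max = (e.max' hne : WithBot ℕ) := (Finset.coe_max' hne).symm
        have : e.max' hne = M := by rw [hmax'] at hmax; simpa using hmax
        have hMe : M ∈ e := this ▸ e.max'_mem hne
        have hubM : ∀ x ∈ e, x ≤ M := fun x hx => this ▸ e.le_max' x hx
        refine ⟨fun x hx => ?_, hcard, ?_⟩
        · rw [Finset.mem_Icc]
          exact ⟨(Finset.mem_Icc.mp (hsub hx)).1, hubM x hx⟩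
        · intro x hx
          simp only [Finset.mem_insert, Finset.mem_singleton] at hx
          rcases hx with rfl | rfl
          · exact hve
          · exact hMe
      · rintro ⟨hsub, hcard, hve⟩
        have hvin : v ∈ e := hve (Finset.mem_insert_self v {M})
        have hMin : M ∈ e := hve (by simp)
        have hub : ∀ x ∈ e, x ≤ M := fun x hx => (Finset.mem_Icc.mp (hsub hx)).2
        have hne : e.Nonempty := ⟨M, hMin⟩
        have hmaxM : e.max' hne = M :=
          le_antisymm (Finset.max'_le _ _ _ hub) (Finset.le_max' _ _ hMin)
        refine ⟨⟨fun x hx => ?_, ⟨hcard, M, hMin, hub, hcond.1⟩, hvin⟩, ?_⟩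
        · rw [Finset.mem_Icc]
          have := Finset.mem_Icc.mp (hsub hx)
          omega
        · rw [← Finset.coe_max' hne, hmaxM]
          rfl
    rw [key, count_superset]
    · have hsM : (Finset.Icc 1 M).card = M := by rw [Nat.card_Icc]; omega
      by_cases hvM : v = M
      · subst hvM
        have : ({v, v} : Finset ℕ).card = 1 := by simp
        rw [if_pos rfl, this, hsM]
      · have : ({v, M} : Finset ℕ).card = 2 := by
          rw [Finset.card_insert_of_notMem (by simpa using hvM), Finset.card_singleton]
        rw [if_neg hvM, this, hsM]
    · intro x hx
      simp only [Finset.mem_insert, Finset.mem_singleton] at hx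
      rw [Finset.mem_Icc]
      rcases hx with rfl | rfl
      · exact ⟨hv, hcond.2⟩
      · omega
    · by_cases hvM : v = M
      · subst hvM
        have : ({v, v} : Finset ℕ).card = 1 := by simp
        omega
      · rw [Finset.card_insert_of_notMem (by simpa using hvM), Finset.card_singleton]; omega
  · rw [if_neg hcond]
    rw [Finset.card_eq_zero, Finset.filter_eq_empty_iff]
    rintro e he hmax
    simp only [Finset.mem_filter, Finset.mem_powerset] at he
    obtain ⟨hsub, ⟨hcard, M', hM'e, hub, hdom⟩, hve⟩ := he
    have hne : e.Nonempty := Finset.card_pos.mp (by omega)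
    have hmax' : e.max = (e.max' hne : WithBot ℕ) := (Finset.coe_max' hne).symm
    have hMeq : e.max' hne = M := by rw [hmax'] at hmax; simpa using hmax
    have hM'eq : M' = M := by
      have h1 : M' ≤ e.max' hne := Finset.le_max' _ _ hM'e
      have h2 : e.max' hne ≤ M' := Finset.max'_le _ _ _ hub
      omega
    have hv1 : v ≤ e.max' hne := e.le_max' v hve
    exact hcond ⟨hM'eq ▸ hdom, by omega⟩

lemma degree_formula (k n v : ℕ) (hk : 3 ≤ k) (hv : 1 ≤ v) (hvn : v ≤ n) :
    antiregDegree k n v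
      = (if isDominating k v then (v-1).choose (k-1) else 0) + domS k n v := by
  unfold antiregDegree
  rw [Finset.card_eq_sum_card_fiberwise (f := fun e => WithBot.unbotD 0 e.max)
      (t := Finset.Icc 1 n) ?_]
  · rw [Finset.sum_congr rfl (fun M hM => fiber_card k n v M hk hv hM)]
    have hsplit : Finset.Icc 1 n = Finset.Icc 1 v ∪ Finset.Ioc v n := by
      ext x
      simp only [Finset.mem_Icc, Finset.mem_union, Finset.mem_Ioc]
      omega
    rw [hsplit,
      Finset.sum_union (by
        simp only [Finset.disjoint_left, Finset.mem_Icc, Finset.mem_Ioc]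
        intro a ha hb; omega)]
    congr 1
    · rw [Finset.sum_eq_single v]
      · by_cases hd : isDominating k v
        · rw [if_pos ⟨hd, le_refl v⟩, if_pos rfl, if_pos hd]
        · rw [if_neg (fun h => hd h.1), if_neg hd]
      · intro M hM hMv
        rw [Finset.mem_Icc] at hM
        rw [if_neg]
        rintro ⟨-, hle⟩
        omega
      · intro h
        exact absurd (Finset.mem_Icc.mpr ⟨hv, le_refl v⟩) h
    · unfold domS
      apply Finset.sum_congr rfl
      intro M hM
      rw [Finset.mem_Ioc] at hM
      by_cases hd : isDominating k M
      · rw [if_pos ⟨hd, by omega⟩, if_neg (by omega), if_pos hd]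
      · rw [if_neg (fun h => hd h.1), if_neg hd]
  · intro e he
    simp only [Finset.mem_coe, Finset.mem_filter, Finset.mem_powerset] at he
    obtain ⟨hsub, ⟨hcard, -⟩, -⟩ := he
    have hne : e.Nonempty := Finset.card_pos.mp (by omega)
    have : WithBot.unbotD 0 e.max = e.max' hne := by
      rw [← Finset.coe_max' hne]; rfl
    show WithBot.unbotD 0 e.max ∈ Finset.Icc 1 n
    rw [this]
    exact hsub (e.max'_mem hne)

lemma domS_anti (k n : ℕ) {v w : ℕ} (h : v ≤ w) : domS k n w ≤ domS k n v :=
  Finset.sum_le_sum_of_subset (Finset.Ioc_subset_Ioc_left h)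

lemma domS_step (k n v : ℕ) (h : v < n) :
    domS k n v
      = (if isDominating k (v+1) then (v-1).choose (k-2) else 0) + domS k n (v+1) := by
  unfold domS
  have hins : Finset.Ioc v n = insert (v+1) (Finset.Ioc (v+1) n) := by
    ext x
    simp only [Finset.mem_Ioc, Finset.mem_insert]
    omega
  rw [hins, Finset.sum_insert (by simp [Finset.mem_Ioc])]
  have h2 : v + 1 - 2 = v - 1 := by omega
  rw [h2]

lemma fact_A (k n v : ℕ) (hk : 3 ≤ k) (hn : k ≤ n) (hv : 1 ≤ v) (hvk : v ≤ k) :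
    antiregDegree k n v = 1 + domS k n k := by
  have hdk : isDominating k k := ⟨le_refl k, by simp⟩
  rcases eq_or_lt_of_le hvk with rfl | hlt
  · rw [degree_formula v n v hk hv hn, if_pos hdk, Nat.choose_self]
  · rw [degree_formula k n v hk hv (by omega), if_neg (fun h => by
      have := h.1; omega), zero_add]
    unfold domS
    have hsplit : Finset.Ioc v n = Finset.Ioc v k ∪ Finset.Ioc k n := by
      ext x
      simp only [Finset.mem_Ioc, Finset.mem_union]
      omega
    rw [hsplit, Finset.sum_union (by
      simp only [Finset.disjoint_left, Finset.mem_Ioc]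
      intro a ha hb; omega)]
    congr 1
    rw [Finset.sum_eq_single k]
    · rw [if_pos hdk, Nat.choose_self]
    · intro M hM hMk
      rw [Finset.mem_Ioc] at hM
      rw [if_neg (fun h => by have := h.1; omega)]
    · intro h
      exact absurd (Finset.mem_Ioc.mpr ⟨hlt, le_refl k⟩) h

lemma step3 (k n j : ℕ) (hk : 3 ≤ k) (hd : isDominating k j) (hjn : j + 2 ≤ n) :
    antiregDegree k n j < antiregDegree k n (j+2) := by
  obtain ⟨hkj, hpar⟩ := hd
  have hd2 : isDominating k (j+2) := ⟨by omega, by omega⟩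
  have hnd1 : ¬ isDominating k (j+1) := by rintro ⟨_, h⟩; omega
  rw [degree_formula k n j hk (by omega) (by omega),
      degree_formula k n (j+2) hk (by omega) (by omega),
      if_pos ⟨hkj, hpar⟩, if_pos hd2,
      domS_step k n j (by omega), if_neg hnd1,
      domS_step k n (j+1) (by omega), if_pos (show isDominating k (j+1+1) by
        rw [show j+1+1 = j+2 by omega]; exact hd2)]
  obtain ⟨a, rfl⟩ : ∃ a, k = a + 2 := ⟨k - 2, by omega⟩
  obtain ⟨b, rfl⟩ : ∃ b, j = b + 1 := ⟨j - 1, by omega⟩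
  simp only [show a+2-1 = a+1 by omega, show a+2-2 = a by omega,
    show b+1-1 = b by omega, show b+1+2-1 = b+2 by omega,
    show b+1+1-1 = b+1 by omega]
  have key : b.choose (a+1) + (b+1).choose a < (b+2).choose (a+1) := by
    rw [Nat.choose_succ_succ' (b+1) a, Nat.choose_succ_succ' b a]
    have : 0 < b.choose a := Nat.choose_pos (by omega)
    omega
  rw [show b+1+1+1 = b+1+2 by omega]
  omega

lemma mono3 (k n : ℕ) (hk : 3 ≤ k) :
    ∀ j₂ j₁ : ℕ, j₁ < j₂ → j₂ ≤ n → isDominating k j₁ → isDominating k j₂ →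
      antiregDegree k n j₁ < antiregDegree k n j₂ := by
  intro j₂
  induction j₂ using Nat.strong_induction_on with
  | _ j₂ ih =>
    intro j₁ hlt hle hd1 hd2
    obtain ⟨hk1, hp1⟩ := hd1
    obtain ⟨hk2, hp2⟩ := hd2
    have hj2 : j₁ + 2 ≤ j₂ := by omega
    have hdsub : isDominating k (j₂ - 2) := ⟨by omega, by omega⟩
    have hstep : antiregDegree k n (j₂-2) < antiregDegree k n j₂ := by
      have := step3 k n (j₂-2) hk hdsub (by omega)
      rwa [show j₂ - 2 + 2 = j₂ by omega] at this
    rcases eq_or_lt_of_le hj2 with heq | hlt2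
    · rw [show j₁ = j₂ - 2 by omega]
      exact hstep
    · exact lt_trans (ih (j₂-2) (by omega) j₁ (by omega) (by omega) ⟨hk1, hp1⟩ hdsub) hstep

lemma stepUp (k n v : ℕ) (hk : 3 ≤ k) (hkv : k < v) (hvn : v < n)
    (hnd : ¬ isDominating k v) :
    antiregDegree k n v < antiregDegree k n (v+1) := by
  have hpar : (v - k) % 2 = 1 := by
    rcases Nat.mod_two_eq_zero_or_one (v - k) with h | h
    · exact absurd ⟨by omega, h⟩ hnd
    · exact h
  have hd1 : isDominating k (v+1) := ⟨by omega, by omega⟩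
  rw [degree_formula k n v hk (by omega) (by omega),
      degree_formula k n (v+1) hk (by omega) (by omega),
      if_neg hnd, if_pos hd1, zero_add,
      domS_step k n v (by omega), if_pos hd1]
  obtain ⟨a, rfl⟩ : ∃ a, k = a + 2 := ⟨k - 2, by omega⟩
  obtain ⟨b, rfl⟩ : ∃ b, v = b + 1 := ⟨v - 1, by omega⟩
  simp only [show a+2-1 = a+1 by omega, show a+2-2 = a by omega,
    show b+1-1 = b by omega, show b+1+1-1 = b+1 by omega]
  have key : b.choose a < (b+1).choose (a+1) := by
    rw [Nat.choose_succ_succ' b a]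
    have : 0 < b.choose (a+1) := Nat.choose_pos (by omega)
    omega
  omega

lemma isoStep (k n i₁ i₂ : ℕ) (hk : 3 ≤ k) (hki : k < i₁) (h12 : i₁ < i₂) (h2n : i₂ ≤ n)
    (hnd1 : ¬ isDominating k i₁) (hnd2 : ¬ isDominating k i₂) :
    antiregDegree k n i₂ < antiregDegree k n i₁ := by
  have hpar : (i₁ - k) % 2 = 1 := by
    rcases Nat.mod_two_eq_zero_or_one (i₁ - k) with h | h
    · exact absurd ⟨by omega, h⟩ hnd1
    · exact h
  have hd1 : isDominating k (i₁+1) := ⟨by omega, by omega⟩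
  rw [degree_formula k n i₁ hk (by omega) (by omega),
      degree_formula k n i₂ hk (by omega) (by omega),
      if_neg hnd1, if_neg hnd2, zero_add, zero_add,
      domS_step k n i₁ (by omega), if_pos hd1]
  have h1 : domS k n i₂ ≤ domS k n (i₁+1) := domS_anti k n (by omega)
  have h2 : 0 < (i₁-1).choose (k-2) := Nat.choose_pos (by omega)
  omega

lemma dom_gt_nondom (k n i j : ℕ) (hk : 3 ≤ k) (hd : isDominating k i) (hij : i ≤ j)
    (hjn : j ≤ n) (hndj : ¬ isDominating k j) :
    antiregDegree k n j < antiregDegree k n i := by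
  have hki := hd.1
  rw [degree_formula k n i hk (by omega) (by omega),
      degree_formula k n j hk (by omega) (by omega),
      if_pos hd, if_neg hndj, zero_add]
  have h1 : domS k n j ≤ domS k n i := domS_anti k n hij
  have h2 : 0 < (i-1).choose (k-1) := Nat.choose_pos (by omega)
  omega

theorem stmt_13 (k n : ℕ) (hk : 3 ≤ k) (hn : k ≤ n) :
    (∀ i j : ℕ, 1 ≤ i → i ≤ k → 1 ≤ j → j ≤ k →
        antiregDegree k n i = antiregDegree k n j) ∧
    (∀ i₁ i₂ : ℕ, k < i₁ → i₁ < i₂ → i₂ ≤ n →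
        ¬ isDominating k i₁ → ¬ isDominating k i₂ →
        antiregDegree k n k > antiregDegree k n i₁ ∧
          antiregDegree k n i₁ > antiregDegree k n i₂) ∧
    (∀ j₁ j₂ : ℕ, j₁ < j₂ → j₂ ≤ n → isDominating k j₁ → isDominating k j₂ →
        antiregDegree k n j₁ < antiregDegree k n j₂) ∧
    (∀ i j : ℕ, 1 ≤ i → i < j → j ≤ n → k < j →
        antiregDegree k n i ≠ antiregDegree k n j) := by
  have hdk : isDominating k k := ⟨le_refl k, by simp⟩
  refine ⟨?_, ?_, ?_, ?_⟩
  · intro i j hi hik hj hjk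
    rw [fact_A k n i hk hn hi hik, fact_A k n j hk hn hj hjk]
  · intro i₁ i₂ h1 h2 h3 hnd1 hnd2
    exact ⟨dom_gt_nondom k n k i₁ hk hdk (by omega) (by omega) hnd1,
      isoStep k n i₁ i₂ hk h1 h2 h3 hnd1 hnd2⟩
  · intro j₁ j₂ h1 h2 hd1 hd2
    exact mono3 k n hk j₂ j₁ h1 h2 hd1 hd2
  · intro i j hi hij hjn hkj
    by_cases hdj : isDominating k j
    · -- j dominating: show D i < D j
      apply ne_of_lt
      by_cases hik : i ≤ k
      · calc antiregDegree k n i = antiregDegree k n k := by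
              rw [fact_A k n i hk hn hi hik, fact_A k n k hk hn (by omega) (le_refl k)]
          _ < antiregDegree k n j := mono3 k n hk j k hkj hjn hdk hdj
      · push_neg at hik
        by_cases hdi : isDominating k i
        · exact mono3 k n hk j i hij hjn hdi hdj
        · have h1 : antiregDegree k n i < antiregDegree k n (i+1) :=
            stepUp k n i hk hik (by omega) hdi
          rcases eq_or_lt_of_le (show i + 1 ≤ j by omega) with heq | hlt
          · rwa [heq] at h1
          · have hdi1 : isDominating k (i+1) := by
              have hpar : (i - k) % 2 = 1 := by
                rcases Nat.mod_two_eq_zero_or_one (i - k) with h | h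
                · exact absurd ⟨by omega, h⟩ hdi
                · exact h
              exact ⟨by omega, by omega⟩
            exact lt_trans h1 (mono3 k n hk j (i+1) hlt hjn hdi1 hdj)
    · -- j not dominating: show D j < D i
      apply (ne_of_lt · ∘ Eq.symm)
      by_cases hik : i ≤ k
      · calc antiregDegree k n j < antiregDegree k n k :=
              dom_gt_nondom k n k j hk hdk (by omega) hjn hdj
          _ = antiregDegree k n i := by
              rw [fact_A k n i hk hn hi hik, fact_A k n k hk hn (by omega) (le_refl k)]
      · push_neg at hik
        by_cases hdi : isDominating k i
        · exact dom_gt_nondom k n i j hk hdi (by omega) hjn hdj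
        · exact isoStep k n i j hk hik hij hjn hdi hdj
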